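/- Let (W, 𝒲) be a measurable space, ν a probability measure on W, and let a and b be Markov kernels on W, each reversible with respect to ν. Then the palindromic composition a∘b∘a, i.e. the Markov kernel (a∘b∘a)(θ, A) := ∫∫ a(z', A) b(z, dz') a(θ, dz), is reversible with respect to ν. -/

import Mathlib

open MeasureTheory ProbabilityTheory

section PalAux

variable {W : Type*} [MeasurableSpace W]

lemma pal_compProd_swap (ν : Measure W) [IsProbabilityMeasure ν]
    (k : Kernel W W) [IsMarkovKernel k]
    (hk : ∀ A B : Set W, MeasurableSet A → MeasurableSet B →
      ∫⁻ θ in A, k θ B ∂ν = ∫⁻ θ in B, k θ A ∂ν) :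
    (ν ⊗ₘ k).map Prod.swap = ν ⊗ₘ k := by
  refine ext_of_generate_finite _ generateFrom_prod.symm isPiSystem_prod ?_ ?_
  · rintro s ⟨A, hA, B, hB, rfl⟩
    simp only [Set.mem_setOf_eq] at hA hB
    rw [Measure.map_apply measurable_swap (hA.prod hB)]
    have : Prod.swap ⁻¹' (A ×ˢ B) = B ×ˢ A := by
      ext p; simp [Set.mem_prod, and_comm]
    rw [this, Measure.compProd_apply_prod hB hA, Measure.compProd_apply_prod hA hB,
      hk A B hA hB]
  · rw [Measure.map_apply measurable_swap MeasurableSet.univ]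
    simp

lemma pal_lintegral_swap (ν : Measure W) [IsProbabilityMeasure ν]
    (k : Kernel W W) [IsMarkovKernel k]
    (hk : ∀ A B : Set W, MeasurableSet A → MeasurableSet B →
      ∫⁻ θ in A, k θ B ∂ν = ∫⁻ θ in B, k θ A ∂ν)
    {f : W × W → ENNReal} (hf : Measurable f) :
    ∫⁻ θ, ∫⁻ z, f (θ, z) ∂(k θ) ∂ν = ∫⁻ θ, ∫⁻ z, f (z, θ) ∂(k θ) ∂ν := by
  have h1 : ∫⁻ θ, ∫⁻ z, f (θ, z) ∂(k θ) ∂ν = ∫⁻ p, f p ∂(ν ⊗ₘ k) :=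
    (Measure.lintegral_compProd hf).symm
  have h2 : ∫⁻ θ, ∫⁻ z, f (z, θ) ∂(k θ) ∂ν = ∫⁻ p, f p.swap ∂(ν ⊗ₘ k) :=
    (Measure.lintegral_compProd (hf.comp measurable_swap)).symm
  rw [h1, h2]
  conv_lhs => rw [← pal_compProd_swap ν k hk]
  rw [lintegral_map hf measurable_swap]

end PalAux

/-- the palindromic composition `a ∘ b ∘ a` (first `a`, then `b`, then `a`)
of two `ν`-reversible Markov kernels is itself reversible with respect to `ν`. -/
theorem palindromic_composition_reversible
    {W : Type*} [MeasurableSpace W]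
    (ν : Measure W) [IsProbabilityMeasure ν]
    (a b : Kernel W W) [IsMarkovKernel a] [IsMarkovKernel b]
    (ha : ∀ A B : Set W, MeasurableSet A → MeasurableSet B →
      ∫⁻ θ in A, a θ B ∂ν = ∫⁻ θ in B, a θ A ∂ν)
    (hb : ∀ A B : Set W, MeasurableSet A → MeasurableSet B →
      ∫⁻ θ in A, b θ B ∂ν = ∫⁻ θ in B, b θ A ∂ν)
    (aba : W → Set W → ENNReal)
    (haba : ∀ θ A, aba θ A = ∫⁻ z, ∫⁻ z', a z' A ∂(b z) ∂(a θ)) :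
    ∀ A B : Set W, MeasurableSet A → MeasurableSet B →
      ∫⁻ θ in A, aba θ B ∂ν = ∫⁻ θ in B, aba θ A ∂ν := by
  have key : ∀ A B : Set W, MeasurableSet A → MeasurableSet B →
      ∫⁻ θ in A, aba θ B ∂ν = ∫⁻ θ, ∫⁻ z', a z' B * a θ A ∂(b θ) ∂ν := by
    intro A B hA hB
    set g : W → ENNReal := fun z => ∫⁻ z', a z' B ∂(b z) with hg_def
    have hg : Measurable g := by
      have : g = fun z => (a ∘ₖ b) z B := by
        funext z; rw [Kernel.comp_apply' a b z hB]
      rw [this]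
      exact Kernel.measurable_coe _ hB
    have step1 : ∫⁻ θ in A, aba θ B ∂ν
        = ∫⁻ θ, ∫⁻ z, A.indicator 1 θ * g z ∂(a θ) ∂ν := by
      rw [← lintegral_indicator hA]
      congr 1
      funext θ
      by_cases hθ : θ ∈ A
      · simp [hθ, haba, lintegral_const_mul _ hg]
        rfl
      · simp [hθ]
    have hf : Measurable fun p : W × W => A.indicator 1 p.1 * g p.2 :=
      ((measurable_one.indicator hA).comp measurable_fst).mul (hg.comp measurable_snd)
    have step2 : ∫⁻ θ, ∫⁻ z, A.indicator 1 θ * g z ∂(a θ) ∂ν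
        = ∫⁻ θ, ∫⁻ z, A.indicator 1 z * g θ ∂(a θ) ∂ν :=
      pal_lintegral_swap ν a ha hf
    have step3 : ∫⁻ θ, ∫⁻ z, A.indicator 1 z * g θ ∂(a θ) ∂ν
        = ∫⁻ θ, g θ * a θ A ∂ν := by
      congr 1
      funext θ
      rw [lintegral_mul_const _ (measurable_one.indicator hA), lintegral_indicator_one hA,
        mul_comm]
    have step4 : ∫⁻ θ, g θ * a θ A ∂ν
        = ∫⁻ θ, ∫⁻ z', a z' B * a θ A ∂(b θ) ∂ν := by
      congr 1
      funext θ
      rw [hg_def]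
      exact (lintegral_mul_const _ (Kernel.measurable_coe a hB)).symm
    rw [step1, step2, step3, step4]
  intro A B hA hB
  rw [key A B hA hB, key B A hB hA]
  have hf : Measurable fun p : W × W => a p.2 B * a p.1 A :=
    ((Kernel.measurable_coe a hB).comp measurable_snd).mul
      ((Kernel.measurable_coe a hA).comp measurable_fst)
  have := pal_lintegral_swap ν b hb hf
  simp only at this
  rw [this]
  congr 1
  funext θ
  congr 1
  funext z'
  exact mul_comm _ _
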